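/- Define P(T) := ∏_{j=1}^{2n} (T − (1+φζ^j)/(1−φζ^j)) ∈ F̄[T]. Then P′(y)·P(−1) is a nonzero element of L, and P′(y)·P(−1) ≡ (2φ^{2n−1}/(1−φ)^{2n−1})·(2n/(1+φ)) modulo N_{L/K}(L^×); that is, there exists z ∈ L^× with P′(y)·P(−1) = (2φ^{2n−1}/(1−φ)^{2n−1})·(2n/(1+φ))·N_{L/K}(z). (Lemma computing P′(y_u)·P(−1) modulo norms, used in the evaluation of transfer factors.) -/

import Mathlib

open Polynomial

private theorem derivative_finset_prod {ι R : Type*} [DecidableEq ι] [CommSemiring R]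
    (s : Finset ι) (f : ι → R[X]) :
    Polynomial.derivative (∏ b ∈ s, f b)
      = ∑ b ∈ s, (∏ a ∈ s.erase b, f a) * Polynomial.derivative (f b) := by
  induction s using Finset.induction_on with
  | empty => simp
  | @insert i s hi ih =>
    rw [Finset.prod_insert hi, derivative_mul, ih, Finset.sum_insert hi,
      Finset.erase_insert hi, Finset.mul_sum]
    congr 1
    · ring
    · apply Finset.sum_congr rfl
      intro b hb
      have hbi : b ≠ i := fun h => hi (h ▸ hb)
      rw [Finset.erase_insert_of_ne (Ne.symm hbi),
        Finset.prod_insert (fun h => hi (Finset.mem_of_mem_erase h))]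
      ring


/-- **Computation of `P′(y)·P(−1)` modulo norms.** Let `F` be a field of characteristic zero,
`n ≥ 1`, and `c ∈ F^×` with `X^{2n} − c` irreducible over `F`. Fix a root `φ` of `X^{2n} − c`
and a primitive `2n`-th root of unity `ζ` in an algebraic closure of `F`, and set
`L := F(φ)`, `K := F(φ²)` and `y := (1+φ)/(1−φ)`. Let
`P(T) := ∏_{j=1}^{2n} (T − (1+φζ^j)/(1−φζ^j))`. Then `P′(y)·P(−1)` is a nonzero element of
`L` and is congruent to `(2φ^{2n−1}/(1−φ)^{2n−1})·(2n/(1+φ))` modulo `N_{L/K}(L^×)`; here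
`N_{L/K}(L^×) = {a² − b²φ² ≠ 0 : a, b ∈ K}` since `L = K(φ)` with `φ² ∈ K` and `[L:K] = 2`. -/
theorem pval_mod_norms {F : Type*} [Field F] [CharZero F]
    (n : ℕ) (hn : 1 ≤ n) (c : F) (hc : c ≠ 0)
    (hirr : Irreducible (X ^ (2 * n) - C c : F[X]))
    (φ ζ : AlgebraicClosure F)
    (hφ : φ ^ (2 * n) = algebraMap F (AlgebraicClosure F) c)
    (hζ : IsPrimitiveRoot ζ (2 * n))
    (P : Polynomial (AlgebraicClosure F))
    (hP : P = ∏ j ∈ Finset.range (2 * n), (X - C ((1 + φ * ζ ^ j) / (1 - φ * ζ ^ j)))) :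
    (Polynomial.derivative P).eval ((1 + φ) / (1 - φ)) * P.eval (-1) ∈
        IntermediateField.adjoin F {φ} ∧
    (Polynomial.derivative P).eval ((1 + φ) / (1 - φ)) * P.eval (-1) ≠ 0 ∧
    ∃ a b : AlgebraicClosure F,
      a ∈ IntermediateField.adjoin F {φ ^ 2} ∧ b ∈ IntermediateField.adjoin F {φ ^ 2} ∧
      a ^ 2 - b ^ 2 * φ ^ 2 ≠ 0 ∧
      (Polynomial.derivative P).eval ((1 + φ) / (1 - φ)) * P.eval (-1) =
        (2 * φ ^ (2 * n - 1) / (1 - φ) ^ (2 * n - 1)) *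
          ((2 * n : AlgebraicClosure F) / (1 + φ)) * (a ^ 2 - b ^ 2 * φ ^ 2) := by
  classical
  have h2n : 0 < 2 * n := by omega
  -- c ≠ 1
  have hc1 : c ≠ 1 := by
    intro h
    subst h
    have h1 : IsRoot (X ^ (2 * n) - C (1 : F)) 1 := by simp
    obtain ⟨q, hq⟩ := dvd_iff_isRoot.mpr h1
    rcases hirr.isUnit_or_isUnit hq with h | h
    · exact (Polynomial.not_isUnit_X_sub_C 1) h
    · have hq0 : q.natDegree = 0 := natDegree_eq_zero_of_isUnit h
      have hd := congrArg natDegree hq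
      have hqne : q ≠ 0 := by
        rintro rfl
        simp only [mul_zero] at hq
        exact (monic_X_pow_sub_C (1 : F) h2n.ne').ne_zero hq
      rw [natDegree_X_pow_sub_C, natDegree_mul (X_sub_C_ne_zero 1) hqne,
        natDegree_X_sub_C, hq0] at hd
      omega
  have hcA0 : algebraMap F (AlgebraicClosure F) c ≠ 0 := fun h => hc ((algebraMap F (AlgebraicClosure F)).injective (by simpa using h))
  have hcA1 : algebraMap F (AlgebraicClosure F) c ≠ 1 := fun h => hc1 ((algebraMap F (AlgebraicClosure F)).injective (by simpa using h))
  have hφ0 : φ ≠ 0 := by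
    rintro rfl
    exact hcA0 (by rw [← hφ, zero_pow h2n.ne'])
  have hden : ∀ j : ℕ, 1 - φ * ζ ^ j ≠ 0 := by
    intro j h
    have hx : φ * ζ ^ j = 1 := by linear_combination -h
    apply hcA1
    rw [← hφ]
    have hz1 : (ζ ^ j) ^ (2 * n) = 1 := by
      rw [← pow_mul, mul_comm j (2 * n), pow_mul, hζ.pow_eq_one, one_pow]
    calc φ ^ (2 * n) = (φ * ζ ^ j) ^ (2 * n) := by rw [mul_pow, hz1, mul_one]
      _ = 1 := by rw [hx, one_pow]
  have h1φ : 1 - φ ≠ 0 := by simpa using hden 0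
  have h1φ' : 1 + φ ≠ 0 := by
    intro h
    have hx : φ = -1 := by linear_combination h
    apply hcA1
    rw [← hφ, hx, pow_mul]
    norm_num
  have hφ2 : 1 - φ ^ 2 ≠ 0 := by
    intro h
    have hx : φ ^ 2 = 1 := by linear_combination -h
    apply hcA1
    rw [← hφ, pow_mul, hx, one_pow]
  -- product over all roots of unity
  have hinj : Set.InjOn (fun j => ζ ^ j) (Finset.range (2 * n)) := fun a ha b hb hab =>
    hζ.pow_inj (Finset.mem_range.mp ha) (Finset.mem_range.mp hb) hab
  have hroots : Polynomial.nthRootsFinset (2 * n) (1 : AlgebraicClosure F)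
      = Finset.image (fun j => ζ ^ j) (Finset.range (2 * n)) := by
    symm
    apply Finset.eq_of_subset_of_card_le
    · intro x hx
      simp only [Finset.mem_image, Finset.mem_range] at hx
      obtain ⟨j, hj, rfl⟩ := hx
      rw [Polynomial.mem_nthRootsFinset h2n, ← pow_mul, mul_comm j (2 * n), pow_mul,
        hζ.pow_eq_one, one_pow]
    · rw [hζ.card_nthRootsFinset, Finset.card_image_of_injOn hinj, Finset.card_range]
  have hprodX : ∀ x : (AlgebraicClosure F), ∏ j ∈ Finset.range (2 * n), (x - ζ ^ j) = x ^ (2 * n) - 1 := by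
    intro x
    have h := hζ.pow_sub_pow_eq_prod_sub_mul (x := x) (y := (1 : (AlgebraicClosure F))) h2n
    rw [hroots, Finset.prod_image hinj] at h
    simpa using h.symm
  have hD : ∏ j ∈ Finset.range (2 * n), (1 - φ * ζ ^ j) = 1 - algebraMap F (AlgebraicClosure F) c := by
    have h1 : ∀ j ∈ Finset.range (2 * n), 1 - φ * ζ ^ j = φ * (φ⁻¹ - ζ ^ j) := by
      intro j _
      field_simp
    rw [Finset.prod_congr rfl h1, Finset.prod_mul_distrib, Finset.prod_const, Finset.card_range,
      hprodX φ⁻¹, inv_pow, hφ]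
    have : φ ^ (2 * n) ≠ 0 := pow_ne_zero _ hφ0
    rw [← hφ]
    field_simp
  have hzero_mem : (0 : ℕ) ∈ Finset.range (2 * n) := Finset.mem_range.mpr h2n
  -- geometric sum: product of (1 - ζ^j) over nonzero j
  have hZ : ∏ j ∈ (Finset.range (2 * n)).erase 0, (1 - ζ ^ j) = ((2 * n : ℕ) : (AlgebraicClosure F)) := by
    have h2 : ∏ j ∈ Finset.range (2 * n), (X - C (ζ ^ j)) = X ^ (2 * n) - 1 := by
      apply Polynomial.funext
      intro x
      simp [eval_prod, hprodX x]
    have h3 : (X - C (1 : (AlgebraicClosure F))) * ∑ i ∈ Finset.range (2 * n), X ^ i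
        = X ^ (2 * n) - 1 := by
      have h4 := geom_sum_mul (X : (AlgebraicClosure F)[X]) (2 * n)
      rw [mul_comm] at h4
      simpa using h4
    have h1 : (X - C (1 : (AlgebraicClosure F))) * ∏ j ∈ (Finset.range (2 * n)).erase 0,
        (X - C (ζ ^ j)) = X ^ (2 * n) - 1 := by
      rw [← h2, ← Finset.mul_prod_erase (Finset.range (2 * n)) _ hzero_mem]
      simp
    have hcancel := mul_left_cancel₀ (Polynomial.X_sub_C_ne_zero (1 : (AlgebraicClosure F)))
      (h1.trans h3.symm)
    have h4 := congrArg (Polynomial.eval (1 : (AlgebraicClosure F))) hcancel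
    simpa [eval_prod, eval_finset_sum] using h4
  set s : (AlgebraicClosure F) := 1 - algebraMap F (AlgebraicClosure F) c with hs
  have hs0 : s ≠ 0 := sub_ne_zero.mpr (fun h => hcA1 h.symm)
  set D' : (AlgebraicClosure F) := ∏ j ∈ (Finset.range (2 * n)).erase 0, (1 - φ * ζ ^ j) with hD'
  have hDrel : (1 - φ) * D' = s := by
    rw [hD', ← hD, ← Finset.mul_prod_erase (Finset.range (2 * n)) _ hzero_mem]
    simp
  have hD'0 : D' ≠ 0 := by
    intro h
    rw [h, mul_zero] at hDrel
    exact hs0 hDrel.symm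
  have hD'eq : D' = s / (1 - φ) := by
    rw [eq_div_iff h1φ, ← hDrel]; ring
  -- P(-1)
  have hPneg : P.eval (-1) = (-2) ^ (2 * n) / s := by
    rw [hP, eval_prod]
    simp only [eval_sub, eval_X, eval_C]
    have h1 : ∀ j ∈ Finset.range (2 * n),
        (-1 - (1 + φ * ζ ^ j) / (1 - φ * ζ ^ j)) = -2 / (1 - φ * ζ ^ j) := by
      intro j _
      have h2 := hden j
      field_simp
      ring
    rw [Finset.prod_congr rfl h1, Finset.prod_div_distrib, Finset.prod_const,
      Finset.card_range, hD]
  set y : (AlgebraicClosure F) := (1 + φ) / (1 - φ) with hy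
  have hy0 : (1 + φ * ζ ^ 0) / (1 - φ * ζ ^ 0) = y := by simp [hy]
  -- derivative at y
  have hPd : (Polynomial.derivative P).eval y =
      ∏ j ∈ (Finset.range (2 * n)).erase 0, (y - (1 + φ * ζ ^ j) / (1 - φ * ζ ^ j)) := by
    rw [hP, derivative_finset_prod, Polynomial.eval_finset_sum,
      Finset.sum_eq_single 0]
    · simp [eval_prod, hy0]
    · intro j hj hj0
      rw [eval_mul, eval_prod]
      apply mul_eq_zero_of_left
      apply Finset.prod_eq_zero (Finset.mem_erase.mpr ⟨Ne.symm hj0, hzero_mem⟩)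
      simp [hy]
    · intro h
      exact absurd hzero_mem h
  have hfac : ∀ j ∈ (Finset.range (2 * n)).erase 0,
      y - (1 + φ * ζ ^ j) / (1 - φ * ζ ^ j)
        = (2 * φ * (1 - ζ ^ j)) / ((1 - φ) * (1 - φ * ζ ^ j)) := by
    intro j _
    rw [hy]
    have := hden j
    field_simp
    ring
  have hcard : ((Finset.range (2 * n)).erase 0).card = 2 * n - 1 := by
    rw [Finset.card_erase_of_mem hzero_mem, Finset.card_range]
  have hPdval : (Polynomial.derivative P).eval y =
      (2 * φ) ^ (2 * n - 1) * ((2 * n : ℕ) : (AlgebraicClosure F)) / ((1 - φ) ^ (2 * n - 1) * D') := by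
    rw [hPd, Finset.prod_congr rfl hfac, Finset.prod_div_distrib, Finset.prod_mul_distrib,
      Finset.prod_mul_distrib, Finset.prod_mul_distrib, Finset.prod_const, Finset.prod_const,
      Finset.prod_const, hcard, hZ, hD']
    ring
  -- assemble
  obtain ⟨k, hk⟩ : ∃ k, 2 * n = k + 1 := ⟨2 * n - 1, by omega⟩
  have hk' : 2 * n - 1 = k := by omega
  set a : (AlgebraicClosure F) := 2 ^ k / s with ha
  have ha0 : a ≠ 0 := div_ne_zero (pow_ne_zero _ two_ne_zero) hs0
  have hnorm0 : a ^ 2 - a ^ 2 * φ ^ 2 ≠ 0 := by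
    have : a ^ 2 - a ^ 2 * φ ^ 2 = a ^ 2 * (1 - φ ^ 2) := by ring
    rw [this]
    exact mul_ne_zero (pow_ne_zero _ ha0) hφ2
  have hneg2 : (-2 : (AlgebraicClosure F)) ^ (2 * n) = 2 ^ (2 * n) := by
    rw [pow_mul, pow_mul]
    norm_num
  have hcast : ((2 * n : ℕ) : (AlgebraicClosure F)) = 2 * (n : (AlgebraicClosure F)) := by
    push_cast
    ring
  have hmain : (Polynomial.derivative P).eval y * P.eval (-1) =
      (2 * φ ^ (2 * n - 1) / (1 - φ) ^ (2 * n - 1)) *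
        ((2 * n : (AlgebraicClosure F)) / (1 + φ)) * (a ^ 2 - a ^ 2 * φ ^ 2) := by
    rw [hPdval, hPneg, hD'eq, ha, hneg2, hcast, hk', hk]
    field_simp
    ring
  refine ⟨?_, ?_, a, a, ?_, ?_, hnorm0, hmain⟩
  · rw [hmain]
    set K₁ := IntermediateField.adjoin F {φ}
    have hφm : φ ∈ K₁ := IntermediateField.mem_adjoin_simple_self F φ
    have hcm : algebraMap F (AlgebraicClosure F) c ∈ K₁ := IntermediateField.algebraMap_mem K₁ c
    have h2m : (2 : (AlgebraicClosure F)) ∈ K₁ := by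
      have := IntermediateField.algebraMap_mem K₁ (2 : F)
      simpa using this
    have hnm : ((n : ℕ) : (AlgebraicClosure F)) ∈ K₁ := by
      have := IntermediateField.algebraMap_mem K₁ ((n : ℕ) : F)
      simpa using this
    have ham : a ∈ K₁ := by
      rw [ha, hs]
      exact div_mem (pow_mem h2m k) (sub_mem (one_mem K₁) hcm)
    exact mul_mem (mul_mem (div_mem (mul_mem h2m (pow_mem hφm _))
      (pow_mem (sub_mem (one_mem K₁) hφm) _))
      (div_mem (mul_mem h2m hnm) (add_mem (one_mem K₁) hφm)))
      (sub_mem (pow_mem ham 2) (mul_mem (pow_mem ham 2) (pow_mem hφm 2)))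
  · rw [hmain]
    have hn0 : ((2 * n : (AlgebraicClosure F))) ≠ 0 := by
      have : ((2 * n : ℕ) : (AlgebraicClosure F)) ≠ 0 := Nat.cast_ne_zero.mpr (by omega)
      push_cast at this
      exact this
    exact mul_ne_zero (mul_ne_zero
      (div_ne_zero (mul_ne_zero two_ne_zero (pow_ne_zero _ hφ0)) (pow_ne_zero _ h1φ))
      (div_ne_zero hn0 h1φ')) hnorm0
  · set K₂ := IntermediateField.adjoin F {φ ^ 2}
    have hcm : algebraMap F (AlgebraicClosure F) c ∈ K₂ := IntermediateField.algebraMap_mem K₂ c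
    have h2m : (2 : (AlgebraicClosure F)) ∈ K₂ := by
      have := IntermediateField.algebraMap_mem K₂ (2 : F)
      simpa using this
    rw [ha, hs]
    exact div_mem (pow_mem h2m k) (sub_mem (one_mem K₂) hcm)
  · set K₂ := IntermediateField.adjoin F {φ ^ 2}
    have hcm : algebraMap F (AlgebraicClosure F) c ∈ K₂ := IntermediateField.algebraMap_mem K₂ c
    have h2m : (2 : (AlgebraicClosure F)) ∈ K₂ := by
      have := IntermediateField.algebraMap_mem K₂ (2 : F)
      simpa using this
    rw [ha, hs]
    exact div_mem (pow_mem h2m k) (sub_mem (one_mem K₂) hcm)
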